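/- Let $d > 1$, $\varkappa \ge 1$, $U \in \mathcal{P}^d_+(\varkappa)$, $x_0$ the transition point with $U(x_0)=1$, and $\beta(x)=(U(x)-1)/(x-x_0)$ (with $\beta(x_0)=U'(x_0)$). Then $\beta$ is $C^2$ on $(0,x_1]$ for any $x_1>x_0$, and on $(0,x_1]$ satisfies $|\beta'(x)| \le C$ and $|\beta''(x)| \le C x^{\min\{d-2,0\}}$, where $C$ depends only on $d$, $\varkappa$, and $x_1$. -/

import Mathlib

open Set MeasureTheory intervalIntegral Filter
open scoped Interval

/-- Membership in the class `𝒫^d_+(κ)` of potentials on `ℝ⁺`, expressed via given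
derivative functions `U', U'', U'''`. -/
def PotClassP (d κ : ℝ) (U U' U'' U''' : ℝ → ℝ) : Prop :=
  (∀ x > (0:ℝ), HasDerivAt U (U' x) x) ∧
  (∀ x > (0:ℝ), HasDerivAt U' (U'' x) x) ∧
  (∀ x > (0:ℝ), HasDerivAt U'' (U''' x) x) ∧
  (∀ x > (0:ℝ), κ⁻¹ * x ^ d ≤ U x ∧ U x ≤ κ * x ^ d) ∧
  (∀ x > (0:ℝ), κ⁻¹ * x ^ (d - 1) ≤ U' x ∧ U' x ≤ κ * x ^ (d - 1)) ∧
  (∀ x > (0:ℝ), |U'' x| ≤ κ * x ^ (d - 2)) ∧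
  (∀ x > (0:ℝ), |U''' x| ≤ κ * x ^ (d - 3))

lemma rpow_le_max {a b y p : ℝ} (ha : 0 < a) (hay : a ≤ y) (hyb : y ≤ b) :
    y ^ p ≤ max (a ^ p) (b ^ p) := by
  rcases le_or_gt 0 p with hp | hp
  · exact le_max_of_le_right (Real.rpow_le_rpow (ha.le.trans hay) hyb hp)
  · exact le_max_of_le_left (Real.rpow_le_rpow_of_nonpos ha hay hp.le)

lemma aux_deriv_under {κ q : ℝ} (hκ : 0 ≤ κ) {V V' : ℝ → ℝ}
    (hV : ∀ y > (0:ℝ), HasDerivAt V (V' y) y)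
    (hVb : ∀ y > (0:ℝ), |V' y| ≤ κ * y ^ q)
    (n : ℕ) {x₀ x : ℝ} (hx₀ : 0 < x₀) (hx : 0 < x) :
    HasDerivAt (fun z => ∫ t in (0:ℝ)..1, t ^ n * V (x₀ + t * (z - x₀)))
      (∫ t in (0:ℝ)..1, t ^ (n+1) * V' (x₀ + t * (x - x₀))) x := by
  have hVc : ∀ y > (0:ℝ), ContinuousAt V y := fun y hy => (hV y hy).continuousAt
  set m : ℝ := min x x₀ / 2 with hm
  set M : ℝ := x + x₀ with hM
  have hmpos : 0 < m := by
    rw [hm]; have := lt_min hx hx₀; positivity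
  have h2m : 2 * m ≤ x := by
    have := min_le_left x x₀; rw [hm]; linarith
  have hmx₀ : m ≤ x₀ := by
    have := min_le_right x x₀; rw [hm]; linarith
  have hx₀M : x₀ ≤ M := by rw [hM]; linarith
  -- range of the inner point
  have hrange : ∀ z ∈ Metric.ball x m, ∀ t ∈ Icc (0:ℝ) 1,
      m ≤ x₀ + t * (z - x₀) ∧ x₀ + t * (z - x₀) ≤ M := by
    intro z hz t ht
    rw [Metric.mem_ball, Real.dist_eq, abs_lt] at hz
    obtain ⟨hz1, hz2⟩ := hz
    obtain ⟨ht0, ht1⟩ := ht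
    have hzm : m ≤ z := by linarith
    have hzM : z ≤ M := by rw [hM]; linarith
    constructor
    · nlinarith [mul_nonneg (sub_nonneg.mpr ht1) (sub_nonneg.mpr hmx₀),
        mul_nonneg ht0 (sub_nonneg.mpr hzm)]
    · nlinarith [mul_nonneg (sub_nonneg.mpr ht1) (sub_nonneg.mpr hx₀M),
        mul_nonneg ht0 (sub_nonneg.mpr hzM)]
  have hposrange : ∀ z ∈ Metric.ball x m, ∀ t ∈ Icc (0:ℝ) 1, 0 < x₀ + t * (z - x₀) :=
    fun z hz t ht => lt_of_lt_of_le hmpos (hrange z hz t ht).1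
  have hxball : x ∈ Metric.ball x m := Metric.mem_ball_self hmpos
  -- continuity of the integrand in t, for z in the ball
  have hcontOn : ∀ z ∈ Metric.ball x m,
      ContinuousOn (fun t : ℝ => t ^ n * V (x₀ + t * (z - x₀))) (Icc 0 1) := by
    intro z hz t ht
    have h1 : ContinuousAt (fun t : ℝ => x₀ + t * (z - x₀)) t := by fun_prop
    have h2 : ContinuousAt (fun t : ℝ => V (x₀ + t * (z - x₀))) t :=
      ContinuousAt.comp (f := fun t : ℝ => x₀ + t * (z - x₀)) (hVc _ (hposrange z hz t ht)) h1
    exact ((continuousAt_id.pow n).mul h2).continuousWithinAt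
  apply (intervalIntegral.hasDerivAt_integral_of_dominated_loc_of_deriv_le
    (F := fun z t => t ^ n * V (x₀ + t * (z - x₀)))
    (F' := fun z t => t ^ (n+1) * V' (x₀ + t * (z - x₀)))
    (bound := fun _ => κ * max (m ^ q) (M ^ q)) (Metric.ball_mem_nhds x hmpos) ?_ ?_ ?_ ?_ ?_ ?_).2
  · filter_upwards [Metric.ball_mem_nhds x hmpos] with z hz
    exact ((hcontOn z hz).mono (by
      rw [uIoc_of_le (zero_le_one' ℝ)]; exact Ioc_subset_Icc_self)).aestronglyMeasurable
      measurableSet_uIoc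
  · exact ((hcontOn x hxball).mono (by rw [uIcc_of_le (zero_le_one' ℝ)])).intervalIntegrable
  · -- measurability of F' x
    have hmeas : Measurable fun t : ℝ => t ^ (n+1) * deriv V (x₀ + t * (x - x₀)) := by
      exact (measurable_id.pow_const _).mul
        ((measurable_deriv V).comp (by measurability))
    apply hmeas.aestronglyMeasurable.congr
    rw [Filter.eventuallyEq_iff_exists_mem]
    refine ⟨Ι 0 1, self_mem_ae_restrict measurableSet_uIoc, fun t ht => ?_⟩
    rw [uIoc_of_le (zero_le_one' ℝ)] at ht
    have hy := hposrange x hxball t (Ioc_subset_Icc_self ht)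
    simp [(hV _ hy).deriv]
  · refine Eventually.of_forall fun t ht z hz => ?_
    rw [uIoc_of_le (zero_le_one' ℝ)] at ht
    have ht' := Ioc_subset_Icc_self ht
    have hy := hrange z hz t ht'
    have hy0 := hposrange z hz t ht'
    rw [Real.norm_eq_abs, abs_mul]
    calc |t ^ (n+1)| * |V' (x₀ + t * (z - x₀))| ≤ 1 * (κ * max (m ^ q) (M ^ q)) := by
          apply mul_le_mul _ _ (abs_nonneg _) zero_le_one
          · rw [abs_pow, abs_of_nonneg ht'.1]
            exact pow_le_one₀ ht'.1 ht'.2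
          · exact (hVb _ hy0).trans
              (mul_le_mul_of_nonneg_left (rpow_le_max hmpos hy.1 hy.2) hκ)
      _ = κ * max (m ^ q) (M ^ q) := one_mul _
  · exact intervalIntegrable_const
  · refine Eventually.of_forall fun t ht z hz => ?_
    rw [uIoc_of_le (zero_le_one' ℝ)] at ht
    have hy0 := hposrange z hz t (Ioc_subset_Icc_self ht)
    have hinner : HasDerivAt (fun z : ℝ => x₀ + t * (z - x₀)) t z := by
      simpa using (((hasDerivAt_id z).sub_const x₀).const_mul t).const_add x₀
    have := ((hV _ hy0).comp z hinner).const_mul (t ^ n)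
    exact this.congr_deriv (by ring)

set_option maxHeartbeats 3200000 in
/-- The function `β(x) = (U(x)-1)/(x-x₀)` (with `β(x₀)=U'(x₀)`) is `C²` on `(0,x₁]` for
any `x₁ > x₀`, with `|β'| ≤ C` and `|β''(x)| ≤ C x^{min(d-2,0)}` there, where `C` depends
only on `d`, `κ` and `x₁`. -/
theorem stmt_6 (d κ x₁ : ℝ) (hd : 1 < d) (hκ : 1 ≤ κ) (hx₁ : 0 < x₁) :
    ∃ C : ℝ, 0 < C ∧
      ∀ (U U' U'' U''' : ℝ → ℝ) (x₀ : ℝ),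
        PotClassP d κ U U' U'' U''' → 0 < x₀ → U x₀ = 1 → x₀ < x₁ →
        ∀ β : ℝ → ℝ,
          (∀ x, β x = if x = x₀ then U' x₀ else (U x - 1) / (x - x₀)) →
          ∃ β' β'' : ℝ → ℝ,
            (∀ x ∈ Ioc (0:ℝ) x₁, HasDerivAt β (β' x) x) ∧
            (∀ x ∈ Ioc (0:ℝ) x₁, HasDerivAt β' (β'' x) x) ∧
            ContinuousOn β'' (Ioc 0 x₁) ∧
            ∀ x ∈ Ioc (0:ℝ) x₁,
              |β' x| ≤ C ∧ |β'' x| ≤ C * x ^ (min (d - 2) 0) := by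
  have hd0 : (0:ℝ) < d := by linarith
  have hκ0 : (0:ℝ) < κ := by linarith
  obtain ⟨c, hcdef⟩ : ∃ c : ℝ, c = κ⁻¹ ^ d⁻¹ := ⟨_, rfl⟩
  have hc0 : 0 < c := by rw [hcdef]; exact Real.rpow_pos_of_pos (by positivity) _
  obtain ⟨p, hpdef⟩ : ∃ p : ℝ, p = min (d - 2) 0 := ⟨_, rfl⟩
  have hp0 : p ≤ 0 := hpdef ▸ min_le_right _ _
  have hpd2 : p ≤ d - 2 := hpdef ▸ min_le_left _ _
  obtain ⟨A2, hA2def⟩ : ∃ A2 : ℝ, A2 = κ * max ((c/2) ^ (d-2)) (x₁ ^ (d-2)) := ⟨_, rfl⟩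
  obtain ⟨A3, hA3def⟩ : ∃ A3 : ℝ, A3 = κ * max ((c/2) ^ (d-3)) (x₁ ^ (d-3)) := ⟨_, rfl⟩
  obtain ⟨Bβ, hBβdef⟩ : ∃ Bβ : ℝ, Bβ = (κ * x₁ ^ d + 1) / (c/2) := ⟨_, rfl⟩
  obtain ⟨B', hB'def⟩ : ∃ B' : ℝ, B' = max A2 ((κ * x₁ ^ (d-1) + Bβ) / (c/2)) := ⟨_, rfl⟩
  obtain ⟨K, hKdef⟩ : ∃ K : ℝ, K = max (A3 * x₁ ^ (-p))
      ((κ * x₁ ^ (d-2-p) + 2 * B' * x₁ ^ (-p)) / (c/2)) := ⟨_, rfl⟩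
  have hA2nn : 0 ≤ A2 := by
    rw [hA2def]
    have h := Real.rpow_pos_of_pos (show (0:ℝ) < c/2 by linarith) (d-2)
    exact mul_nonneg hκ0.le (le_trans h.le (le_max_left _ _))
  have hA3nn : 0 ≤ A3 := by
    rw [hA3def]
    have h := Real.rpow_pos_of_pos (show (0:ℝ) < c/2 by linarith) (d-3)
    exact mul_nonneg hκ0.le (le_trans h.le (le_max_left _ _))
  have hB'nn : 0 ≤ B' := hB'def ▸ le_trans hA2nn (le_max_left _ _)
  have hKnn : 0 ≤ K := by
    rw [hKdef]
    exact le_trans (mul_nonneg hA3nn (Real.rpow_nonneg hx₁.le _)) (le_max_left _ _)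
  refine ⟨1 + max B' K, by nlinarith [le_max_left B' K], ?_⟩
  rintro U U' U'' U''' x₀ ⟨hD1, hD2, hD3, hUb, hU'b, hU''b, hU'''b⟩ hx₀ hUx₀ hx₀x₁ β hβ
  have hU'c : ∀ y > (0:ℝ), ContinuousAt U' y := fun y hy => (hD2 y hy).continuousAt
  have hU''c : ∀ y > (0:ℝ), ContinuousAt U'' y := fun y hy => (hD3 y hy).continuousAt
  -- lower bound on x₀
  have hcx₀ : c ≤ x₀ := by
    have h1 : (1:ℝ) ≤ κ * x₀ ^ d := hUx₀ ▸ (hUb x₀ hx₀).2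
    have h2 : κ⁻¹ ≤ x₀ ^ d := by
      rw [inv_eq_one_div, div_le_iff₀ hκ0]; nlinarith
    calc c = κ⁻¹ ^ d⁻¹ := hcdef
      _ ≤ (x₀ ^ d) ^ d⁻¹ := Real.rpow_le_rpow (by positivity) h2 (by positivity)
      _ = x₀ := by
          rw [← Real.rpow_mul hx₀.le, mul_inv_cancel₀ (ne_of_gt hd0), Real.rpow_one]
  -- positivity of points on segments
  have hseg : ∀ z > (0:ℝ), ∀ t ∈ Icc (0:ℝ) 1, 0 < x₀ + t * (z - x₀) := by
    intro z hz t ht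
    rcases le_total x₀ z with h | h
    · nlinarith [mul_nonneg ht.1 (sub_nonneg.2 h)]
    · nlinarith [mul_nonneg (sub_nonneg.2 ht.2) (sub_nonneg.2 h)]
  -- β as a parametric integral
  have hβeqg : ∀ z > (0:ℝ), β z = ∫ t in (0:ℝ)..1, t ^ 0 * U' (x₀ + t * (z - x₀)) := by
    intro z hz
    simp only [pow_zero, one_mul]
    rcases eq_or_ne z x₀ with rfl | hne
    · simp [hβ]
    · have hderiv : ∀ t ∈ uIcc (0:ℝ) 1, HasDerivAt (fun t => U (x₀ + t * (z - x₀)))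
          ((z - x₀) * U' (x₀ + t * (z - x₀))) t := by
        intro t ht
        rw [uIcc_of_le (zero_le_one' ℝ)] at ht
        have hinner : HasDerivAt (fun t : ℝ => x₀ + t * (z - x₀)) (z - x₀) t := by
          simpa using ((hasDerivAt_id t).mul_const (z - x₀)).const_add x₀
        have := (hD1 _ (hseg z hz t ht)).comp t hinner
        exact this.congr_deriv (by ring)
      have hint : IntervalIntegrable (fun t => (z - x₀) * U' (x₀ + t * (z - x₀)))
          MeasureTheory.volume 0 1 := by
        apply ContinuousOn.intervalIntegrable
        rw [uIcc_of_le (zero_le_one' ℝ)]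
        intro t ht
        have h1 : ContinuousAt (fun t : ℝ => x₀ + t * (z - x₀)) t := by fun_prop
        exact (continuousAt_const.mul (ContinuousAt.comp
          (f := fun t : ℝ => x₀ + t * (z - x₀)) (hU'c _ (hseg z hz t ht)) h1)).continuousWithinAt
      have hFTC := intervalIntegral.integral_eq_sub_of_hasDerivAt hderiv hint
      rw [intervalIntegral.integral_const_mul] at hFTC
      have hzz : x₀ + (z - x₀) = z := by ring
      simp only [one_mul, zero_mul, add_zero, hzz] at hFTC
      rw [hUx₀] at hFTC
      rw [hβ z, if_neg hne, div_eq_iff (sub_ne_zero.2 hne)]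
      linear_combination -hFTC
  obtain ⟨B1, hB1def⟩ : ∃ B1 : ℝ → ℝ, B1 = fun z => ∫ t in (0:ℝ)..1, t ^ 1 * U'' (x₀ + t * (z - x₀)) := ⟨_, rfl⟩
  obtain ⟨B2, hB2def⟩ : ∃ B2 : ℝ → ℝ, B2 = fun z => ∫ t in (0:ℝ)..1, t ^ 2 * U''' (x₀ + t * (z - x₀)) := ⟨_, rfl⟩
  have hβd : ∀ x > (0:ℝ), HasDerivAt β (B1 x) x := by
    intro x hx
    have hg := aux_deriv_under hκ0.le hD2 hU''b 0 hx₀ hx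
    have heq : β =ᶠ[nhds x] fun z => ∫ t in (0:ℝ)..1, t ^ 0 * U' (x₀ + t * (z - x₀)) := by
      filter_upwards [Ioi_mem_nhds hx] with z hz
      exact hβeqg z hz
    simp only [hB1def]
    exact (heq.hasDerivAt_iff).2 hg
  have hβ'd : ∀ x > (0:ℝ), HasDerivAt B1 (B2 x) x := by
    intro x hx
    simp only [hB1def, hB2def]
    exact aux_deriv_under hκ0.le hD3 hU'''b 1 hx₀ hx
  -- algebraic identities
  have hbmul : ∀ z, β z * (z - x₀) = U z - 1 := by
    intro z; rcases eq_or_ne z x₀ with rfl | hz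
    · simp [hβ, hUx₀]
    · rw [hβ z, if_neg hz, div_mul_cancel₀ _ (sub_ne_zero.2 hz)]
  have id1 : ∀ x > (0:ℝ), U' x = B1 x * (x - x₀) + β x := by
    intro x hx
    have h1 : HasDerivAt (fun z => β z * (z - x₀)) (B1 x * (x - x₀) + β x * 1) x :=
      (hβd x hx).mul ((hasDerivAt_id x).sub_const x₀)
    have h2 : HasDerivAt (fun z => β z * (z - x₀)) (U' x) x := by
      have heq : (fun z => β z * (z - x₀)) = fun z => U z - 1 := funext hbmul
      rw [heq]; exact (hD1 x hx).sub_const 1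
    have := h2.unique h1; linarith
  have id2 : ∀ x > (0:ℝ), U'' x = B2 x * (x - x₀) + 2 * B1 x := by
    intro x hx
    have h1 : HasDerivAt (fun z => B1 z * (z - x₀) + β z)
        (B2 x * (x - x₀) + B1 x * 1 + B1 x) x :=
      ((hβ'd x hx).mul ((hasDerivAt_id x).sub_const x₀)).add (hβd x hx)
    have h2 : HasDerivAt (fun z => B1 z * (z - x₀) + β z) (U'' x) x := by
      have heq : (fun z => B1 z * (z - x₀) + β z) =ᶠ[nhds x] U' := by
        filter_upwards [Ioi_mem_nhds hx] with z hz
        linarith [id1 z hz]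
      exact (heq.hasDerivAt_iff).2 (hD2 x hx)
    have := h2.unique h1; linarith
  -- values at x₀
  have hB1x₀ : B1 x₀ = U'' x₀ / 2 := by
    simp only [hB1def, sub_self, mul_zero, add_zero, pow_one]
    rw [intervalIntegral.integral_mul_const, integral_id]
    norm_num
    linarith
  have hB2x₀ : B2 x₀ = U''' x₀ / 3 := by
    simp only [hB2def, sub_self, mul_zero, add_zero]
    rw [intervalIntegral.integral_mul_const, integral_pow]
    norm_num
    linarith
  have hBβnn : 0 ≤ Bβ := by
    rw [hBβdef]
    apply div_nonneg _ (by linarith)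
    nlinarith [Real.rpow_nonneg hx₁.le d]
  -- near-case segment range
  have hnearrange : ∀ x ∈ Ioc (0:ℝ) x₁, |x - x₀| ≤ x₀ / 2 → ∀ t ∈ Icc (0:ℝ) 1,
      c/2 ≤ x₀ + t * (x - x₀) ∧ x₀ + t * (x - x₀) ≤ x₁ := by
    intro x hx hnear t ht
    rw [abs_le] at hnear
    constructor
    · nlinarith [mul_nonneg (sub_nonneg.2 ht.2) (show (0:ℝ) ≤ x₀ - c/2 by linarith),
        mul_nonneg ht.1 (show (0:ℝ) ≤ x - c/2 by linarith)]
    · nlinarith [mul_nonneg (sub_nonneg.2 ht.2) (show (0:ℝ) ≤ x₁ - x₀ by linarith),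
        mul_nonneg ht.1 (sub_nonneg.2 hx.2)]
  -- global bound for B1
  have hB1bound : ∀ x ∈ Ioc (0:ℝ) x₁, |B1 x| ≤ B' := by
    intro x hx
    rcases le_or_gt |x - x₀| (x₀ / 2) with hnear | hfar
    · have hpt : ∀ t ∈ Ι (0:ℝ) 1, ‖t ^ 1 * U'' (x₀ + t * (x - x₀))‖ ≤ A2 := by
        intro t ht
        rw [uIoc_of_le (zero_le_one' ℝ)] at ht
        have ht' := Ioc_subset_Icc_self ht
        have hy := hnearrange x hx hnear t ht'
        have hy0 : (0:ℝ) < x₀ + t * (x - x₀) := lt_of_lt_of_le (by linarith) hy.1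
        rw [Real.norm_eq_abs, abs_mul]
        calc |t ^ 1| * |U'' (x₀ + t * (x - x₀))| ≤ 1 * A2 := by
              apply mul_le_mul _ _ (abs_nonneg _) zero_le_one
              · rw [abs_pow, abs_of_nonneg ht'.1]; exact pow_le_one₀ ht'.1 ht'.2
              · rw [hA2def]
                exact (hU''b _ hy0).trans (mul_le_mul_of_nonneg_left
                  (rpow_le_max (show (0:ℝ) < c/2 by linarith) hy.1 hy.2) hκ0.le)
          _ = A2 := one_mul _
      have hnorm := intervalIntegral.norm_integral_le_of_norm_le_const hpt
      calc |B1 x| = ‖∫ t in (0:ℝ)..1, t ^ 1 * U'' (x₀ + t * (x - x₀))‖ := by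
            simp only [hB1def, Real.norm_eq_abs]
        _ ≤ A2 * |1 - 0| := hnorm
        _ = A2 := by norm_num
        _ ≤ B' := hB'def ▸ le_max_left _ _
    · have hne : x ≠ x₀ := by
        intro h; rw [h, sub_self, abs_zero] at hfar; linarith
      have hd2 : c / 2 ≤ |x - x₀| := by linarith
      have hUxpos : 0 < U x := lt_of_lt_of_le (mul_pos (inv_pos.2 hκ0) (Real.rpow_pos_of_pos hx.1 d)) (hUb x hx.1).1
      have hUxle : U x ≤ κ * x₁ ^ d :=
        (hUb x hx.1).2.trans (mul_le_mul_of_nonneg_left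
          (Real.rpow_le_rpow hx.1.le hx.2 hd0.le) hκ0.le)
      have hβb : |β x| ≤ Bβ := by
        rw [hβ x, if_neg hne, abs_div, hBβdef]
        apply div_le_div₀ _ _ (by linarith) hd2
        · nlinarith [Real.rpow_nonneg hx₁.le d]
        · rw [abs_le]
          constructor <;> nlinarith [Real.rpow_nonneg hx₁.le d]
      have hU'x : |U' x| ≤ κ * x₁ ^ (d-1) := by
        have h1 := (hU'b x hx.1).1
        have h2 := (hU'b x hx.1).2
        have h3 : x ^ (d-1) ≤ x₁ ^ (d-1) := Real.rpow_le_rpow hx.1.le hx.2 (by linarith)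
        have h4 : (0:ℝ) < κ⁻¹ * x ^ (d-1) := mul_pos (inv_pos.2 hκ0) (Real.rpow_pos_of_pos hx.1 (d-1))
        rw [abs_le]; constructor <;> nlinarith
      have hform : B1 x = (U' x - β x) / (x - x₀) := by
        rw [eq_div_iff (sub_ne_zero.2 hne)]
        linarith [id1 x hx.1]
      rw [hform, abs_div]
      calc |U' x - β x| / |x - x₀| ≤ (κ * x₁ ^ (d-1) + Bβ) / (c/2) := by
            apply div_le_div₀ _ _ (by linarith) hd2
            · have h5 : (0:ℝ) ≤ κ * x₁ ^ (d-1) := by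
                have := Real.rpow_nonneg hx₁.le (d-1); positivity
              linarith
            · exact (abs_sub _ _).trans (by linarith [hU'x, hβb])
        _ ≤ B' := hB'def ▸ le_max_right _ _
  -- key rpow comparison
  have hx₁p : ∀ x ∈ Ioc (0:ℝ) x₁, (1:ℝ) ≤ x₁ ^ (-p) * x ^ p := by
    intro x hx
    have h1 : x₁ ^ p ≤ x ^ p := Real.rpow_le_rpow_of_nonpos hx.1 hx.2 hp0
    calc (1:ℝ) = x₁ ^ (-p) * x₁ ^ p := by
          rw [← Real.rpow_add hx₁, neg_add_cancel, Real.rpow_zero]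
      _ ≤ x₁ ^ (-p) * x ^ p :=
          mul_le_mul_of_nonneg_left h1 (Real.rpow_nonneg hx₁.le _)
  -- global bound for B2
  have hB2bound : ∀ x ∈ Ioc (0:ℝ) x₁, |B2 x| ≤ K * x ^ p := by
    intro x hx
    have hxp : (0:ℝ) < x ^ p := Real.rpow_pos_of_pos hx.1 _
    rcases le_or_gt |x - x₀| (x₀ / 2) with hnear | hfar
    · have hpt : ∀ t ∈ Ι (0:ℝ) 1, ‖t ^ 2 * U''' (x₀ + t * (x - x₀))‖ ≤ A3 := by
        intro t ht
        rw [uIoc_of_le (zero_le_one' ℝ)] at ht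
        have ht' := Ioc_subset_Icc_self ht
        have hy := hnearrange x hx hnear t ht'
        have hy0 : (0:ℝ) < x₀ + t * (x - x₀) := lt_of_lt_of_le (by linarith) hy.1
        rw [Real.norm_eq_abs, abs_mul]
        calc |t ^ 2| * |U''' (x₀ + t * (x - x₀))| ≤ 1 * A3 := by
              apply mul_le_mul _ _ (abs_nonneg _) zero_le_one
              · rw [abs_pow, abs_of_nonneg ht'.1]; exact pow_le_one₀ ht'.1 ht'.2
              · rw [hA3def]
                exact (hU'''b _ hy0).trans (mul_le_mul_of_nonneg_left
                  (rpow_le_max (show (0:ℝ) < c/2 by linarith) hy.1 hy.2) hκ0.le)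
          _ = A3 := one_mul _
      have hnorm := intervalIntegral.norm_integral_le_of_norm_le_const hpt
      calc |B2 x| = ‖∫ t in (0:ℝ)..1, t ^ 2 * U''' (x₀ + t * (x - x₀))‖ := by
            simp only [hB2def, Real.norm_eq_abs]
        _ ≤ A3 * |1 - 0| := hnorm
        _ = A3 * 1 := by norm_num
        _ ≤ A3 * (x₁ ^ (-p) * x ^ p) := mul_le_mul_of_nonneg_left (hx₁p x hx) hA3nn
        _ = (A3 * x₁ ^ (-p)) * x ^ p := by ring
        _ ≤ K * x ^ p := mul_le_mul_of_nonneg_right (hKdef ▸ le_max_left _ _) hxp.le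
    · have hne : x ≠ x₀ := by
        intro h; rw [h, sub_self, abs_zero] at hfar; linarith
      have hd2 : c / 2 ≤ |x - x₀| := by linarith
      have hform : B2 x = (U'' x - 2 * B1 x) / (x - x₀) := by
        rw [eq_div_iff (sub_ne_zero.2 hne)]
        linarith [id2 x hx.1]
      have hU''x : |U'' x| ≤ κ * (x₁ ^ (d-2-p) * x ^ p) := by
        refine (hU''b x hx.1).trans (mul_le_mul_of_nonneg_left ?_ hκ0.le)
        have hsplit : x ^ (d-2) = x ^ (d-2-p) * x ^ p := by
          rw [← Real.rpow_add hx.1]; congr 1; ring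
        rw [hsplit]
        exact mul_le_mul_of_nonneg_right
          (Real.rpow_le_rpow hx.1.le hx.2 (by linarith)) hxp.le
      have hB1x : |B1 x| ≤ B' * (x₁ ^ (-p) * x ^ p) := by
        calc |B1 x| ≤ B' := hB1bound x hx
          _ = B' * 1 := (mul_one _).symm
          _ ≤ B' * (x₁ ^ (-p) * x ^ p) := mul_le_mul_of_nonneg_left (hx₁p x hx) hB'nn
      rw [hform, abs_div]
      calc |U'' x - 2 * B1 x| / |x - x₀|
          ≤ ((κ * x₁ ^ (d-2-p) + 2 * B' * x₁ ^ (-p)) * x ^ p) / (c/2) := by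
            apply div_le_div₀ _ _ (by linarith) hd2
            · apply mul_nonneg _ hxp.le
              nlinarith [mul_nonneg hκ0.le (Real.rpow_nonneg hx₁.le (d-2-p)),
                mul_nonneg hB'nn (Real.rpow_nonneg hx₁.le (-p))]
            · calc |U'' x - 2 * B1 x| ≤ |U'' x| + |2 * B1 x| := abs_sub _ _
                _ = |U'' x| + 2 * |B1 x| := by rw [abs_mul, abs_two]
                _ ≤ κ * (x₁ ^ (d-2-p) * x ^ p) + 2 * (B' * (x₁ ^ (-p) * x ^ p)) := by
                    linarith [hU''x, hB1x]
                _ = (κ * x₁ ^ (d-2-p) + 2 * B' * x₁ ^ (-p)) * x ^ p := by ring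
        _ = ((κ * x₁ ^ (d-2-p) + 2 * B' * x₁ ^ (-p)) / (c/2)) * x ^ p := by ring
        _ ≤ K * x ^ p := mul_le_mul_of_nonneg_right (hKdef ▸ le_max_right _ _) hxp.le
  -- continuity of B2 on (0, x₁]
  have hcontB2 : ContinuousOn B2 (Ioc 0 x₁) := by
    intro x hx
    apply ContinuousAt.continuousWithinAt
    rcases eq_or_ne x x₀ with heqx | hxx₀
    · rw [heqx]
      have hψd : HasDerivAt (fun z => U'' z - 2 * B1 z) (U''' x₀ - 2 * B2 x₀) x₀ :=
        (hD3 x₀ hx₀).sub ((hβ'd x₀ hx₀).const_mul 2)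
      have hψ0 : U'' x₀ - 2 * B1 x₀ = 0 := by rw [hB1x₀]; ring
      have hslope := hasDerivAt_iff_tendsto_slope.mp hψd
      have heq : slope (fun z => U'' z - 2 * B1 z) x₀ =ᶠ[nhdsWithin x₀ {x₀}ᶜ] B2 := by
        filter_upwards [nhdsWithin_le_nhds (Ioi_mem_nhds hx₀), self_mem_nhdsWithin]
          with z hz hz'
        have hz'' : z ≠ x₀ := hz'
        simp only [slope_def_field]
        rw [hψ0, sub_zero, div_eq_iff (sub_ne_zero.2 hz'')]
        linarith [id2 z hz]
      have hlim : U''' x₀ - 2 * B2 x₀ = B2 x₀ := by rw [hB2x₀]; ring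
      have htend : Tendsto B2 (nhdsWithin x₀ {x₀}ᶜ) (nhds (B2 x₀)) := by
        rw [← hlim]; exact hslope.congr' heq
      have := htend.sup (tendsto_pure_nhds B2 x₀)
      rwa [nhdsNE_sup_pure] at this
    · have hfun : ContinuousAt (fun z => (U'' z - 2 * B1 z) / (z - x₀)) x := by
        apply ContinuousAt.div
        · exact (hU''c x hx.1).sub ((continuousAt_const).mul (hβ'd x hx.1).continuousAt)
        · fun_prop
        · exact sub_ne_zero.2 hxx₀
      apply hfun.congr
      filter_upwards [IsOpen.mem_nhds (isOpen_Ioi.inter isOpen_compl_singleton)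
        (⟨hx.1, hxx₀⟩ : x ∈ Ioi (0:ℝ) ∩ {x₀}ᶜ)] with z hz
      rw [div_eq_iff (sub_ne_zero.2 hz.2)]
      linarith [id2 z hz.1]
  -- conclusion
  refine ⟨B1, B2, fun x hx => hβd x hx.1, fun x hx => hβ'd x hx.1, hcontB2, ?_⟩
  intro x hx
  have hxp : (0:ℝ) < x ^ p := Real.rpow_pos_of_pos hx.1 _
  constructor
  · exact (hB1bound x hx).trans (by nlinarith [le_max_left B' K])
  · rw [← hpdef]
    refine (hB2bound x hx).trans (mul_le_mul_of_nonneg_right ?_ hxp.le)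
    nlinarith [le_max_right B' K]
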